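/- Let S be an additively reduced semidomain and G a torsion-free abelian group with a compatible linear order. If f = ∑_{i=0}^n s_i x^{g_i} ∈ S[G] with exponents g_0 > g_1 > ⋯ > g_n, all s_i nonzero, n ≥ 1, and 2g_1 < g_0 + g_n, then f is monolithic. -/

import Mathlib

/-- Witness that `S` is a semidomain: an injective semiring hom into an integral domain. -/
structure SemidomainWitness (S : Type*) [CommSemiring S] where
  D : Type
  [commRing : CommRing D]
  [isDomain : IsDomain D]
  emb : S →+* D
  inj : Function.Injective emb

/-- `S` is a semidomain, i.e. (isomorphic to) a subsemiring of an integral domain. -/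
def IsSemidomain (S : Type*) [CommSemiring S] : Prop := Nonempty (SemidomainWitness S)

/-- `S` is additively reduced: `0` is the only additively invertible element. -/
def AddReduced (S : Type*) [AddZeroClass S] : Prop := ∀ a b : S, a + b = 0 → a = 0

/-- `s` is an atom of the additive monoid `(S, +)` (for `S` additively reduced):
it is nonzero and cannot be written as a sum of two nonzero elements. -/
def IsAddAtom {S : Type*} [AddZeroClass S] (s : S) : Prop :=
  s ≠ 0 ∧ ∀ a b : S, s = a + b → a = 0 ∨ b = 0

/-- `S` is additively Furstenberg: every nonzero element is divisible in `(S, +)`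
by an additive atom. -/
def AddFurstenberg (S : Type*) [AddZeroClass S] : Prop :=
  ∀ s : S, s ≠ 0 → ∃ a t : S, IsAddAtom a ∧ s = a + t


section GroupAlg
variable {S : Type*} [CommSemiring S] {G : Type*} [AddCommGroup G]

/-- A monomial `s·x^g` in the group semidomain `S[G]`. -/
def IsMonomial (f : AddMonoidAlgebra S G) : Prop :=
  ∃ (g : G) (s : S), f = AddMonoidAlgebra.single g s

/-- `f` is monolithic: every factorization of `f` in `S[G]` has a monomial factor. -/
def Monolithic (f : AddMonoidAlgebra S G) : Prop :=
  f ≠ 0 ∧ ∀ p q : AddMonoidAlgebra S G, f = p * q → IsMonomial p ∨ IsMonomial q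

end GroupAlg


lemma addReduced_term_eq_zero {S : Type*} [AddCommMonoid S] (hred : ∀ a b : S, a + b = 0 → a = 0)
    {ι : Type*} {t : Finset ι} {F : ι → S} (hsum : ∑ i ∈ t, F i = 0) :
    ∀ i ∈ t, F i = 0 := by
  classical
  intro i hi
  rw [← Finset.add_sum_erase t F hi] at hsum
  exact hred _ _ hsum

lemma add_mem_support_mul {S : Type*} [CommSemiring S] [NoZeroDivisors S]
    {G : Type*} [AddCommGroup G] (hred : ∀ a b : S, a + b = 0 → a = 0)
    {p q : AddMonoidAlgebra S G} {x y : G}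
    (hx : x ∈ p.coeff.support) (hy : y ∈ q.coeff.support) : x + y ∈ (p * q).coeff.support := by
  classical
  rw [Finsupp.mem_support_iff] at hx hy ⊢
  intro h
  rw [AddMonoidAlgebra.mul_apply] at h
  have h1 := addReduced_term_eq_zero hred h x (Finsupp.mem_support_iff.2 hx)
  have h2 := addReduced_term_eq_zero hred h1 y (Finsupp.mem_support_iff.2 hy)
  simp only [add_right_inj, if_pos rfl] at h2
  exact (mul_ne_zero hx hy) h2

lemma exists_ne_of_not_monomial {S : Type*} [CommSemiring S] {G : Type*} [AddCommGroup G]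
    {p : AddMonoidAlgebra S G} (hp : ¬ IsMonomial p) (c : G) : ∃ x ∈ p.coeff.support, x ≠ c := by
  by_contra h
  push_neg at h
  exact hp ⟨c, p.coeff c, AddMonoidAlgebra.coeff_injective <| Finsupp.support_subset_singleton.mp
    (fun x hx => Finset.mem_singleton.2 (h x hx))⟩

/-- If `f = ∑_{i=0}^n s_i x^{g_i}` with `g_0 > g_1 > ⋯ > g_n`, all `s_i ≠ 0`, `n ≥ 1`,
and `2g_1 < g_0 + g_n`, then `f` is monolithic. -/
theorem monolithic_of_two_smul_snd_lt
    {S : Type*} [CommSemiring S] {G : Type*} [AddCommGroup G] [LinearOrder G] [IsOrderedAddMonoid G]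
    (hS : IsSemidomain S) (hred : AddReduced S)
    (n : ℕ) (hn : 1 ≤ n) (s : Fin (n + 1) → S) (g : Fin (n + 1) → G)
    (hs : ∀ i, s i ≠ 0) (hg : StrictAnti g)
    (hgap : 2 • g ⟨1, by omega⟩ < g ⟨0, by omega⟩ + g ⟨n, by omega⟩)
    (f : AddMonoidAlgebra S G)
    (hf : f = ∑ i, AddMonoidAlgebra.single (g i) (s i)) :
    Monolithic f := by
  classical
  obtain ⟨W⟩ := hS
  letI : CommRing W.D := W.commRing
  letI : IsDomain W.D := W.isDomain
  haveI : NoZeroDivisors S := by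
    constructor
    intro a b hab
    have : W.emb a * W.emb b = 0 := by rw [← map_mul, hab, map_zero]
    rcases mul_eq_zero.mp this with h | h
    · exact Or.inl (W.inj (by rw [h, map_zero]))
    · exact Or.inr (W.inj (by rw [h, map_zero]))
  set i0 : Fin (n + 1) := ⟨0, by omega⟩ with hi0
  set i1 : Fin (n + 1) := ⟨1, by omega⟩ with hi1
  set iN : Fin (n + 1) := ⟨n, by omega⟩ with hiN
  have hfa : ∀ c : G, f.coeff c = ∑ i, if g i = c then s i else 0 := by
    intro c
    rw [hf, AddMonoidAlgebra.coeff_sum, Finset.sum_apply']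
    exact Finset.sum_congr rfl fun i _ => Finsupp.single_apply
  have hgi : ∀ i, f.coeff (g i) = s i := by
    intro i
    rw [hfa]
    simp [hg.injective.eq_iff]
  have hmem : ∀ i, g i ∈ f.coeff.support := fun i =>
    Finsupp.mem_support_iff.2 (by rw [hgi i]; exact hs i)
  have hsurj : ∀ c ∈ f.coeff.support, ∃ i, g i = c := by
    intro c hc
    rw [Finsupp.mem_support_iff, hfa] at hc
    obtain ⟨i, _, hi⟩ := Finset.exists_ne_zero_of_sum_ne_zero hc
    by_cases h : g i = c
    · exact ⟨i, h⟩
    · simp [h] at hi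
  have hf0 : f ≠ 0 := fun h => hs i0 (by rw [← hgi i0, h]; rfl)
  refine ⟨hf0, ?_⟩
  intro p q hpq
  by_contra hcon
  push_neg at hcon
  obtain ⟨hp, hq⟩ := hcon
  have hp0 : p ≠ 0 := fun h => hf0 (by rw [hpq, h, zero_mul])
  have hq0 : q ≠ 0 := fun h => hf0 (by rw [hpq, h, mul_zero])
  have hA : p.coeff.support.Nonempty := Finsupp.support_nonempty_iff.2 (by simpa using hp0)
  have hB : q.coeff.support.Nonempty := Finsupp.support_nonempty_iff.2 (by simpa using hq0)
  set a0 := p.coeff.support.max' hA with ha0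
  set b0 := q.coeff.support.max' hB with hb0
  set am := p.coeff.support.min' hA with ham
  set bm := q.coeff.support.min' hB with hbm
  obtain ⟨a1, ha1m, ha1⟩ := exists_ne_of_not_monomial hp a0
  obtain ⟨b1, hb1m, hb1⟩ := exists_ne_of_not_monomial hq b0
  have ha1lt : a1 < a0 := lt_of_le_of_ne (p.coeff.support.le_max' a1 ha1m) ha1
  have hb1lt : b1 < b0 := lt_of_le_of_ne (q.coeff.support.le_max' b1 hb1m) hb1
  have key : ∀ x ∈ p.coeff.support, ∀ y ∈ q.coeff.support, ∃ j, g j = x + y := by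
    intro x hx y hy
    apply hsurj
    rw [hpq]
    exact add_mem_support_mul hred hx hy
  -- (1) a0 + b0 ≤ g i0
  obtain ⟨j, hj⟩ := key a0 (p.coeff.support.max'_mem hA) b0 (q.coeff.support.max'_mem hB)
  have htop : a0 + b0 ≤ g i0 := hj ▸ hg.antitone (by simp [hi0, Fin.le_def])
  have hle : g i0 ≤ a0 + b0 := by
    have hm : g i0 ∈ (p * q).coeff.support := hpq ▸ hmem i0
    have := AddMonoidAlgebra.support_coeff_mul_subset p q hm
    rw [Finset.mem_add] at this
    obtain ⟨x, hx, y, hy, hxy⟩ := this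
    rw [← hxy]
    exact add_le_add (p.coeff.support.le_max' x hx) (q.coeff.support.le_max' y hy)
  -- (2) g iN ≤ am + bm
  obtain ⟨k, hk⟩ := key am (p.coeff.support.min'_mem hA) bm (q.coeff.support.min'_mem hB)
  have hbot : g iN ≤ am + bm := hk ▸ hg.antitone (by simp [hiN, Fin.le_def]; omega)
  -- (3) a1 + b0 ≤ g i1
  obtain ⟨j1, hj1⟩ := key a1 ha1m b0 (q.coeff.support.max'_mem hB)
  have hj1ne : j1 ≠ i0 := by
    intro h
    have : g i0 ≤ a1 + b0 := le_of_eq (h ▸ hj1)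
    have : a0 + b0 < a0 + b0 := lt_of_le_of_lt (le_trans htop this)
      (add_lt_add_left ha1lt b0)
    exact lt_irrefl _ this
  have h3 : a1 + b0 ≤ g i1 := by
    rw [← hj1]
    apply hg.antitone
    rw [Fin.le_def]
    simp only [hi1]
    have := Fin.val_ne_of_ne hj1ne
    simp [hi0] at this
    rw [Fin.ext_iff, Fin.val_zero] at this
    omega
  -- (4) a0 + b1 ≤ g i1
  obtain ⟨j2, hj2⟩ := key a0 (p.coeff.support.max'_mem hA) b1 hb1m
  have hj2ne : j2 ≠ i0 := by
    intro h
    have : g i0 ≤ a0 + b1 := le_of_eq (h ▸ hj2)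
    have : a0 + b0 < a0 + b0 := lt_of_le_of_lt (le_trans htop this)
      (add_lt_add_right hb1lt a0)
    exact lt_irrefl _ this
  have h4 : a0 + b1 ≤ g i1 := by
    rw [← hj2]
    apply hg.antitone
    rw [Fin.le_def]
    simp only [hi1]
    have := Fin.val_ne_of_ne hj2ne
    simp [hi0] at this
    rw [Fin.ext_iff, Fin.val_zero] at this
    omega
  have h5 : am ≤ a1 := p.coeff.support.min'_le a1 ha1m
  have h6 : bm ≤ b1 := q.coeff.support.min'_le b1 hb1m
  have hgap' : 2 • g i1 < g i0 + g iN := hgap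
  rw [two_nsmul] at hgap'
  have : g i0 + g iN ≤ (a1 + b0) + (a0 + b1) := by
    calc g i0 + g iN ≤ (a0 + b0) + (am + bm) := by exact add_le_add hle hbot
    _ ≤ (a0 + b0) + (a1 + b1) := by exact add_le_add_right (add_le_add h5 h6) _
    _ = (a1 + b0) + (a0 + b1) := by abel
  have : g i0 + g iN ≤ g i1 + g i1 := this.trans (add_le_add h3 h4)
  exact absurd (lt_of_lt_of_le hgap' this) (lt_irrefl _)
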